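/- Let $a<b$ be real numbers and let $v\colon[a,b]\to\mathbb{R}$ be continuous on $[a,b]$ and differentiable at every point of $[a,b]$ with derivative $v'$, and assume that $v'$ is square-integrable on $[a,b]$ and interval-integrable on $[a,b]$. Set $v_0=\min_{[a,b]}v$, $v_1=\max_{[a,b]}v$, and $\tilde I=\{\,s\in[a,b]\mid v_0<v(s)<v_1\,\}$. Then $\int_{\tilde I}\big(v(s)-v_0\big)^2\,ds\le |\tilde I|^2\int_{\tilde I}(v'(s))^2\,ds$, where $|\tilde I|$ denotes the Lebesgue measure of $\tilde I$. -/

import Mathlib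

open MeasureTheory Set Filter Topology
open scoped Interval

/-- On a closed level set of a differentiable function, the derivative vanishes
almost everywhere. -/
lemma aux_deriv_zero_ae_levelset (v v' : ℝ → ℝ) (A : Set ℝ) (hA : IsClosed A) (c : ℝ)
    (hAc : ∀ s ∈ A, v s = c) (hd : ∀ s ∈ A, HasDerivAt v (v' s) s) :
    ∀ᵐ s ∂(volume : Measure ℝ), s ∈ A → v' s = 0 := by
  obtain ⟨V, D, hVc, hD, hVD⟩ := exists_countable_union_perfect_of_isClosed hA
  have hDzero : ∀ x ∈ D, v' x = 0 := by
    intro x hx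
    have hxA : x ∈ A := by rw [hVD]; exact Or.inr hx
    have hacc : AccPt x (𝓟 D) := hD.acc x hx
    have hne : (𝓝[≠] x ⊓ 𝓟 D).NeBot := hacc
    have h1 : Tendsto (slope v x) (𝓝[≠] x ⊓ 𝓟 D) (𝓝 (v' x)) :=
      ((hasDerivAt_iff_tendsto_slope).mp (hd x hxA)).mono_left inf_le_left
    have h2 : Tendsto (slope v x) (𝓝[≠] x ⊓ 𝓟 D) (𝓝 0) := by
      have heq : slope v x =ᶠ[𝓝[≠] x ⊓ 𝓟 D] fun _ => (0 : ℝ) := by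
        have hD' : D ∈ 𝓝[≠] x ⊓ 𝓟 D := mem_inf_of_right (mem_principal_self D)
        filter_upwards [hD'] with t ht
        have htA : t ∈ A := by rw [hVD]; exact Or.inr ht
        simp [slope_def_field, hAc t htA, hAc x hxA]
      exact Tendsto.congr' heq.symm tendsto_const_nhds
    exact (tendsto_nhds_unique h1 h2)
  have hVnull : ∀ᵐ s ∂(volume : Measure ℝ), s ∉ V := by
    have : (volume : Measure ℝ) V = 0 := hVc.measure_zero volume
    exact measure_eq_zero_iff_ae_notMem.mp this
  filter_upwards [hVnull] with s hsV hsA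
  rw [hVD] at hsA
  rcases hsA with h | h
  · exact absurd h hsV
  · exact hDzero s h

/-- Poincaré-type inequality in a bounded interval. -/
theorem poincare_type_interval (a b : ℝ) (hab : a < b) (v v' : ℝ → ℝ)
    (hcont : ContinuousOn v (Icc a b))
    (hderiv : ∀ s ∈ Icc a b, HasDerivAt v (v' s) s)
    (hsq : IntegrableOn (fun s => (v' s) ^ 2) (Icc a b) volume)
    (hint : IntervalIntegrable v' volume a b)
    (v0 v1 : ℝ)
    (hv0 : v0 = sInf (v '' Icc a b)) (hv1 : v1 = sSup (v '' Icc a b))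
    (I : Set ℝ) (hI : I = {s ∈ Icc a b | v0 < v s ∧ v s < v1}) :
    ∫ s in I, (v s - v0) ^ 2 ≤ (volume I).toReal ^ 2 * ∫ s in I, (v' s) ^ 2 := by
  have hIccne : (Icc a b).Nonempty := nonempty_Icc.mpr hab.le
  have hcomp : IsCompact (Icc a b) := isCompact_Icc
  have himg : IsCompact (v '' Icc a b) := hcomp.image_of_continuousOn hcont
  have himgne : (v '' Icc a b).Nonempty := hIccne.image v
  -- minimum point
  obtain ⟨x0, hx0, hmin⟩ := hcomp.exists_isMinOn hIccne hcont
  have hvx0 : v x0 = v0 := by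
    rw [hv0]
    have hleast : IsLeast (v '' Icc a b) (v x0) :=
      ⟨⟨x0, hx0, rfl⟩, by rintro _ ⟨y, hy, rfl⟩; exact hmin hy⟩
    exact hleast.csInf_eq.symm
  have hv0le : ∀ s ∈ Icc a b, v0 ≤ v s := by
    intro s hs
    rw [← hvx0]; exact hmin hs
  have hlev1 : ∀ s ∈ Icc a b, v s ≤ v1 := by
    intro s hs
    rw [hv1]
    exact le_csSup himg.bddAbove ⟨s, hs, rfl⟩
  have hIsub : I ⊆ Icc a b := by rw [hI]; exact fun s hs => hs.1
  -- measurability of I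
  have hIeq : I = Icc a b ∩ interior (v ⁻¹' (Ioo v0 v1)) := by
    rw [hI]; ext t
    constructor
    · rintro ⟨ht, h1, h2⟩
      refine ⟨ht, mem_interior_iff_mem_nhds.mpr ?_⟩
      exact (hderiv t ht).continuousAt.preimage_mem_nhds (isOpen_Ioo.mem_nhds ⟨h1, h2⟩)
    · rintro ⟨ht, h2⟩
      have := interior_subset h2
      exact ⟨ht, this.1, this.2⟩
  have hImeas : MeasurableSet I := by
    rw [hIeq]; exact measurableSet_Icc.inter isOpen_interior.measurableSet
  have hIfin : volume I < ⊤ :=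
    lt_of_le_of_lt (measure_mono hIsub) measure_Icc_lt_top
  -- level sets are closed
  have hclosed : ∀ c : ℝ, IsClosed {s ∈ Icc a b | v s = c} := by
    intro c
    rw [← isSeqClosed_iff_isClosed]
    intro u t hu hut
    have htI : t ∈ Icc a b := isClosed_Icc.isSeqClosed (fun n => (hu n).1) hut
    refine ⟨htI, ?_⟩
    have hc : Tendsto (fun n => v (u n)) atTop (𝓝 (v t)) :=
      ((hderiv t htI).continuousAt.tendsto).comp hut
    have hc' : Tendsto (fun n => v (u n)) atTop (𝓝 c) := by
      have heq : (fun n => v (u n)) = fun _ => c := funext fun n => (hu n).2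
      rw [heq]; exact tendsto_const_nhds
    exact tendsto_nhds_unique hc hc'
  -- a.e. vanishing of v' outside I within Icc
  have hae : ∀ᵐ s ∂(volume : Measure ℝ), s ∈ Icc a b \ I → v' s = 0 := by
    have h0 := aux_deriv_zero_ae_levelset v v' _ (hclosed v0) v0 (fun s hs => hs.2)
      (fun s hs => hderiv s hs.1)
    have h1 := aux_deriv_zero_ae_levelset v v' _ (hclosed v1) v1 (fun s hs => hs.2)
      (fun s hs => hderiv s hs.1)
    filter_upwards [h0, h1] with s hs0 hs1 hs
    obtain ⟨hsIcc, hsnI⟩ := hs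
    rw [hI] at hsnI
    have : v s = v0 ∨ v s = v1 := by
      by_contra hcon
      push_neg at hcon
      exact hsnI ⟨hsIcc, lt_of_le_of_ne (hv0le s hsIcc) (Ne.symm hcon.1),
        lt_of_le_of_ne (hlev1 s hsIcc) hcon.2⟩
    rcases this with h | h
    · exact hs0 ⟨hsIcc, h⟩
    · exact hs1 ⟨hsIcc, h⟩
  -- integrability facts
  have hv'int : IntegrableOn v' (Icc a b) volume :=
    (integrableOn_Icc_iff_integrableOn_Ioc).mpr hint.1
  have habs_int : IntegrableOn (fun t => |v' t|) I volume :=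
    (hv'int.mono_set hIsub).abs
  have hsqI : IntegrableOn (fun s => (v' s) ^ 2) I volume := hsq.mono_set hIsub
  set M : ℝ := ∫ t in I, (v' t) ^ 2 with hM
  have hMnn : 0 ≤ M := setIntegral_nonneg hImeas (fun t _ => sq_nonneg _)
  set μI : ℝ := (volume I).toReal with hμI
  have hμInn : 0 ≤ μI := ENNReal.toReal_nonneg
  -- Cauchy-Schwarz: ∫_I |v'| ≤ μI^(1/2) * M^(1/2)
  have hfin : IsFiniteMeasure (volume.restrict I) :=
    ⟨by rwa [Measure.restrict_apply_univ]⟩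
  have hv'meas : AEStronglyMeasurable v' (volume.restrict I) := by
    have h1 : AEStronglyMeasurable v' (volume.restrict (Icc a b)) := by
      have hae2 : ∀ᵐ s ∂(volume.restrict (Icc a b)), deriv v s = v' s := by
        have hIoo : ∀ᵐ s ∂(volume.restrict (Icc a b)), s ∈ Ioo a b := by
          rw [ae_restrict_iff' measurableSet_Icc]
          have : (volume : Measure ℝ) (Icc a b \ Ioo a b) = 0 := by
            have hsub2 : Icc a b \ Ioo a b ⊆ {a} ∪ {b} := by
              rintro x ⟨⟨h1, h2⟩, h3⟩
              simp only [mem_Ioo, not_and_or, not_lt] at h3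
              rcases h3 with h | h
              · exact Or.inl (mem_singleton_iff.mpr (le_antisymm h h1))
              · exact Or.inr (mem_singleton_iff.mpr (le_antisymm h2 h))
            exact measure_mono_null hsub2
              (measure_union_null (measure_singleton a) (measure_singleton b))
          exact (measure_eq_zero_iff_ae_notMem.mp this).mono fun x hx hxI => by
            by_contra h; exact hx ⟨hxI, h⟩
        filter_upwards [hIoo] with s hs
        exact (hderiv s (Ioo_subset_Icc_self hs)).deriv
      exact (measurable_deriv v).aestronglyMeasurable.congr hae2
    exact h1.mono_measure (Measure.restrict_mono hIsub le_rfl)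
  have hmem2 : MemLp v' 2 (volume.restrict I) :=
    (memLp_two_iff_integrable_sq hv'meas).mpr hsqI
  have hCS : ∫ t in I, |v' t| ≤ μI ^ ((2:ℝ)⁻¹) * M ^ ((2:ℝ)⁻¹) := by
    have hpq : Real.HolderConjugate 2 2 := Real.holderConjugate_iff.mpr ⟨one_lt_two, by norm_num⟩
    have h := integral_mul_le_Lp_mul_Lq_of_nonneg (μ := volume.restrict I) hpq
      (f := fun _ => (1:ℝ)) (g := fun t => |v' t|)
      (Eventually.of_forall fun _ => zero_le_one)
      (Eventually.of_forall fun t => abs_nonneg _)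
      (by simpa using memLp_const (μ := volume.restrict I) (p := 2) (1:ℝ))
      (by rw [show ENNReal.ofReal 2 = 2 by simp]; exact hmem2.abs)
    simp only [one_mul] at h
    have e1 : ∫ t in I, (1:ℝ) ^ (2:ℝ) = μI := by
      simp [hμI, Measure.real]
    have e2 : ∫ t in I, |v' t| ^ (2:ℝ) = M := by
      rw [hM]
      refine setIntegral_congr_fun hImeas fun t _ => ?_
      rw [show ((2:ℝ) = ((2:ℕ):ℝ)) by norm_num, Real.rpow_natCast, sq_abs]
    rw [e1, e2, one_div] at h
    exact h
  -- pointwise bound on I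
  have hpt : ∀ s ∈ I, (v s - v0) ^ 2 ≤ μI * M := by
    intro s hsI
    have hsIcc : s ∈ Icc a b := hIsub hsI
    have huIcc : uIcc x0 s ⊆ Icc a b := uIcc_subset_Icc hx0 hsIcc
    have hftc : ∫ t in x0..s, v' t = v s - v0 := by
      rw [← hvx0]
      exact intervalIntegral.integral_eq_sub_of_hasDerivAt
        (fun t ht => hderiv t (huIcc ht))
        (hint.mono_set (by rwa [uIcc_of_le hab.le]))
    have hb1 : |v s - v0| ≤ ∫ t in Ι x0 s, |v' t| := by
      rw [← hftc]
      simpa [Real.norm_eq_abs] using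
        intervalIntegral.norm_integral_le_integral_norm_uIoc (f := v') (a := x0) (b := s)
          (μ := volume)
    have huIoc : Ι x0 s ⊆ Icc a b := uIoc_subset_uIcc.trans huIcc
    have hb2 : ∫ t in Ι x0 s, |v' t| = ∫ t in Ι x0 s, I.indicator (fun t => |v' t|) t := by
      refine setIntegral_congr_ae measurableSet_uIoc ?_
      filter_upwards [hae] with t ht htu
      by_cases htI : t ∈ I
      · rw [indicator_of_mem htI]
      · rw [indicator_of_notMem htI, ht ⟨huIoc htu, htI⟩, abs_zero]
    have hb3 : ∫ t in Ι x0 s, I.indicator (fun t => |v' t|) t ≤ ∫ t in I, |v' t| := by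
      rw [setIntegral_indicator hImeas]
      refine setIntegral_mono_set habs_int
        (Eventually.of_forall fun t => abs_nonneg _)
        (HasSubset.Subset.eventuallyLE inter_subset_right)
    have hchain : |v s - v0| ≤ μI ^ ((2:ℝ)⁻¹) * M ^ ((2:ℝ)⁻¹) :=
      hb1.trans ((hb2.le.trans hb3).trans hCS)
    calc (v s - v0) ^ 2 = |v s - v0| ^ 2 := (sq_abs _).symm
      _ ≤ (μI ^ ((2:ℝ)⁻¹) * M ^ ((2:ℝ)⁻¹)) ^ 2 :=
          pow_le_pow_left₀ (abs_nonneg _) hchain 2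
      _ = μI * M := by
          rw [mul_pow, ← Real.rpow_natCast (μI ^ ((2:ℝ)⁻¹)) 2,
            ← Real.rpow_natCast (M ^ ((2:ℝ)⁻¹)) 2,
            ← Real.rpow_mul hμInn, ← Real.rpow_mul hMnn]
          norm_num
  -- conclude
  have hmeasf : AEStronglyMeasurable (fun s => (v s - v0) ^ 2) (volume.restrict I) := by
    have : ContinuousOn (fun s => (v s - v0) ^ 2) (Icc a b) :=
      ((hcont.sub continuousOn_const).pow 2)
    exact (this.aestronglyMeasurable measurableSet_Icc).mono_measure
      (Measure.restrict_mono hIsub le_rfl)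
  have hfinal : ‖∫ s in I, (v s - v0) ^ 2‖ ≤ (μI * M) * μI :=
    norm_setIntegral_le_of_norm_le_const hIfin
      (fun s hs => by rw [Real.norm_eq_abs, abs_of_nonneg (sq_nonneg _)]; exact hpt s hs)
  calc ∫ s in I, (v s - v0) ^ 2 ≤ ‖∫ s in I, (v s - v0) ^ 2‖ := le_abs_self _
    _ ≤ (μI * M) * μI := hfinal
    _ = μI ^ 2 * M := by ring
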